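/- For real numbers c > 0 and 0 < y < 1, the Perron integral (1/(2πi)) ∫_{c-i∞}^{c+i∞} y^s ds/s equals 0. -/

import Mathlib

lemma my_integral_exp_mul (k a b : ℝ) (hk : k ≠ 0) :
    ∫ x in a..b, Real.exp (k * x) = (Real.exp (k * b) - Real.exp (k * a)) / k := by
  rw [intervalIntegral.integral_comp_mul_left (fun u => Real.exp u) hk,
    integral_exp, smul_eq_mul]
  ring


open Complex Filter

section PerronAux
open Set


lemma horiz_bound (c y : ℝ) (hc : 0 < c) (hy0 : 0 < y) (hy1 : y < 1) (T R t0 : ℝ)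
    (hT : 1 ≤ T) (hR : c ≤ R) (ht0 : |t0| = T) :
    ‖∫ x in c..R, (y : ℂ) ^ ((x : ℂ) + t0 * I) / ((x : ℂ) + t0 * I)‖ ≤
      y ^ c / ((-Real.log y) * T) := by
  have hlog : Real.log y < 0 := Real.log_neg hy0 hy1
  have hL : 0 < -Real.log y := by linarith
  have hT0 : 0 < T := lt_of_lt_of_le one_pos hT
  have ht0ne : t0 ≠ 0 := by
    intro h; rw [h] at ht0; simp at ht0; linarith
  have hne : ∀ x : ℝ, (x : ℂ) + t0 * I ≠ 0 := by
    intro x h0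
    have him : ((x:ℂ) + t0 * I).im = t0 := by simp
    rw [h0] at him; simp at him; exact ht0ne him.symm
  have key : ∀ x : ℝ, ‖(y : ℂ) ^ ((x : ℂ) + t0 * I) / ((x : ℂ) + t0 * I)‖ ≤ y ^ x / T := by
    intro x
    rw [norm_div, Complex.norm_cpow_eq_rpow_re_of_pos hy0]
    simp only [add_re, ofReal_re, mul_re, I_re, mul_zero, ofReal_im, I_im, mul_one, zero_sub,
      sub_zero, mul_im, zero_mul, add_zero]
    gcongr
    · calc T = |t0| := ht0.symm
        _ = |((x:ℂ) + t0 * I).im| := by simp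
        _ ≤ ‖(x:ℂ) + t0 * I‖ := Complex.abs_im_le_norm _
  have hcont : Continuous fun x : ℝ => (y : ℂ) ^ ((x : ℂ) + t0 * I) / ((x : ℂ) + t0 * I) := by
    apply Continuous.div
    · exact Continuous.const_cpow (Complex.continuous_ofReal.add continuous_const)
        (Or.inl (ofReal_ne_zero.mpr hy0.ne'))
    · exact Complex.continuous_ofReal.add continuous_const
    · exact fun x => hne x
  have hconty : Continuous fun x : ℝ => y ^ x := by
    have : (fun x : ℝ => y ^ x) = fun x => Real.exp (Real.log y * x) :=
      funext fun x => Real.rpow_def_of_pos hy0 x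
    rw [this]
    exact Real.continuous_exp.comp (continuous_const.mul continuous_id)
  calc ‖∫ x in c..R, (y : ℂ) ^ ((x : ℂ) + t0 * I) / ((x : ℂ) + t0 * I)‖
      ≤ ∫ x in c..R, ‖(y : ℂ) ^ ((x : ℂ) + t0 * I) / ((x : ℂ) + t0 * I)‖ :=
        intervalIntegral.norm_integral_le_integral_norm hR
    _ ≤ ∫ x in c..R, y ^ x / T := by
        apply intervalIntegral.integral_mono_on hR
        · exact hcont.norm.intervalIntegrable _ _
        · exact (hconty.div_const T).intervalIntegrable _ _
        · exact fun x _ => key x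
    _ = (∫ x in c..R, y ^ x) / T := by rw [intervalIntegral.integral_div]
    _ ≤ (y ^ c / (-Real.log y)) / T := by
        gcongr
        have hrw : ∀ x : ℝ, y ^ x = Real.exp (Real.log y * x) := fun x =>
          Real.rpow_def_of_pos hy0 x
        simp only [hrw]
        rw [my_integral_exp_mul _ _ _ hlog.ne]
        have h1 : (0:ℝ) < Real.exp (Real.log y * R) := Real.exp_pos _
        have h2 : (0:ℝ) < Real.exp (Real.log y * c) := Real.exp_pos _
        have heq : (Real.exp (Real.log y * c) - Real.exp (Real.log y * R)) / (-Real.log y)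
            = (Real.exp (Real.log y * R) - Real.exp (Real.log y * c)) / Real.log y := by
          rw [div_neg, ← neg_div, neg_sub]
        rw [← heq]
        gcongr
        linarith
    _ = y ^ c / ((-Real.log y) * T) := by rw [div_div]

lemma vert_bound (c y : ℝ) (hc : 0 < c) (hy0 : 0 < y) (hy1 : y < 1) (T : ℝ)
    (hT : 1 ≤ T) (hcT : c ≤ T) :
    ‖∫ t in (-T)..T, (y : ℂ) ^ ((c : ℂ) + t * I) / ((c : ℂ) + t * I)‖ ≤
      (2 * (y ^ c / (-Real.log y)) + 2) / T := by
  have hT0 : 0 < T := lt_of_lt_of_le one_pos hT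
  have hL : 0 < -Real.log y := by have := Real.log_neg hy0 hy1; linarith
  set R : ℝ := T ^ 2 with hRdef
  have hR : c ≤ R := le_trans hcT (by nlinarith)
  have hR0 : 0 < R := by positivity
  set f : ℂ → ℂ := fun s => (y : ℂ) ^ s / s with hf
  set z : ℂ := (c : ℂ) - T * I with hz
  set w : ℂ := (R : ℂ) + T * I with hw
  have hzre : z.re = c := by simp [hz]
  have hzim : z.im = -T := by simp [hz]
  have hwre : w.re = R := by simp [hw]
  have hwim : w.im = T := by simp [hw]
  have hdiff' : DifferentiableOn ℂ f (Set.uIcc c R ×ℂ Set.uIcc (-T) T) := by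
    have hne : ∀ s ∈ (Set.uIcc c R ×ℂ Set.uIcc (-T) T), s ≠ (0 : ℂ) := by
      intro s hs h0
      have hre : s.re ∈ Set.uIcc c R := hs.1
      rw [uIcc_of_le hR] at hre
      have : (0:ℝ) < s.re := lt_of_lt_of_le hc hre.1
      rw [h0] at this; simp at this
    exact DifferentiableOn.div
      ((Differentiable.const_cpow differentiable_id
        (Or.inl (ofReal_ne_zero.mpr hy0.ne'))).differentiableOn)
      differentiableOn_id hne
  have rect := Complex.integral_boundary_rect_eq_zero_of_differentiableOn f z w
    (by rw [hzre, hzim, hwre, hwim]; exact hdiff')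
  rw [hzre, hzim, hwre, hwim] at rect
  have hleft : I • (∫ t in (-T)..T, f ((c : ℂ) + t * I)) =
      (∫ x in c..R, f ((x : ℂ) + ((-T : ℝ) : ℂ) * I)) -
      (∫ x in c..R, f ((x : ℂ) + ((T : ℝ) : ℂ) * I)) +
      I • (∫ t in (-T)..T, f ((R : ℂ) + t * I)) :=
    (sub_eq_zero.mp rect).symm
  have hb : ∀ t ∈ Set.uIoc (-T) T, ‖f ((R : ℂ) + t * I)‖ ≤ 1 / T ^ 2 := by
    intro t _
    rw [hf]
    simp only
    rw [norm_div, Complex.norm_cpow_eq_rpow_re_of_pos hy0]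
    rw [show ((R:ℂ) + t * I).re = R by simp]
    have h1 : y ^ R ≤ 1 := Real.rpow_le_one hy0.le hy1.le hR0.le
    have h2 : (T:ℝ) ^ 2 ≤ ‖(R : ℂ) + t * I‖ := by
      calc (T:ℝ) ^ 2 = |((R:ℂ) + t * I).re| := by
            rw [show ((R:ℂ) + t * I).re = R by simp, abs_of_pos hR0]
        _ ≤ ‖(R:ℂ) + t * I‖ := Complex.abs_re_le_norm _
    exact div_le_div₀ zero_le_one h1 (by positivity) h2
  have hrightbd : ‖∫ t in (-T)..T, f ((R : ℂ) + t * I)‖ ≤ 2 / T := by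
    calc ‖∫ t in (-T)..T, f ((R : ℂ) + t * I)‖ ≤ (1 / T ^ 2) * |T - (-T)| :=
          intervalIntegral.norm_integral_le_of_norm_le_const hb
      _ = 2 / T := by
          rw [abs_of_pos (by linarith : (0:ℝ) < T - (-T))]
          field_simp
          ring
  have hbot := horiz_bound c y hc hy0 hy1 T R (-T) hT hR (by rw [abs_neg, abs_of_pos hT0])
  have htop := horiz_bound c y hc hy0 hy1 T R T hT hR (abs_of_pos hT0)
  show ‖∫ t in (-T)..T, f ((c : ℂ) + t * I)‖ ≤ _
  calc ‖∫ t in (-T)..T, f ((c : ℂ) + t * I)‖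
      = ‖I • (∫ t in (-T)..T, f ((c : ℂ) + t * I))‖ := by
        rw [norm_smul, Complex.norm_I, one_mul]
    _ ≤ ‖∫ x in c..R, f ((x : ℂ) + ((-T : ℝ) : ℂ) * I)‖ +
        ‖∫ x in c..R, f ((x : ℂ) + ((T : ℝ) : ℂ) * I)‖ +
        ‖I • (∫ t in (-T)..T, f ((R : ℂ) + t * I))‖ := by
          rw [hleft]
          exact le_trans (norm_add_le _ _) (by gcongr; exact norm_sub_le _ _)
    _ ≤ y ^ c / ((-Real.log y) * T) + y ^ c / ((-Real.log y) * T) + 2 / T := by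
        gcongr <;>
          first
            | (rw [norm_smul, Complex.norm_I, one_mul]; exact hrightbd)
            | exact hbot
            | exact htop
    _ = (2 * (y ^ c / (-Real.log y)) + 2) / T := by
        rw [show y ^ c / ((-Real.log y) * T) = (y ^ c / (-Real.log y)) / T from
          (div_div _ _ _).symm, ← add_div, ← add_div]
        ring

end PerronAux

/-- For real `c > 0` and `0 < y < 1`, the Perron integral
`(1/(2πi)) ∫_{c-i∞}^{c+i∞} y^s ds/s`, interpreted as the symmetric limit of
integrals from `c - iT` to `c + iT`, equals `0`. -/
theorem perron_formula_of_lt_one (c y : ℝ) (hc : 0 < c) (hy0 : 0 < y) (hy1 : y < 1) :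
    Tendsto (fun T : ℝ =>
      (1 / (2 * Real.pi * I)) *
        ∫ t in (-T)..T, (y : ℂ) ^ ((c : ℂ) + t * I) / ((c : ℂ) + t * I) * I)
      atTop (nhds 0) := by
  set C : ℝ := 2 * (y ^ c / (-Real.log y)) + 2 with hC
  refine squeeze_zero_norm' (a := fun T : ℝ => C / T) ?_ ?_
  · filter_upwards [eventually_ge_atTop (1:ℝ), eventually_ge_atTop c] with T hT1 hTc
    have hbd := vert_bound c y hc hy0 hy1 T hT1 hTc
    have heq : (∫ t in (-T)..T, (y : ℂ) ^ ((c : ℂ) + t * I) / ((c : ℂ) + t * I) * I)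
        = (∫ t in (-T)..T, (y : ℂ) ^ ((c : ℂ) + t * I) / ((c : ℂ) + t * I)) * I :=
      intervalIntegral.integral_mul_const _ _
    rw [heq, norm_mul, norm_mul, Complex.norm_I, mul_one]
    have hpi : (1:ℝ) ≤ 2 * Real.pi := by
      have := Real.pi_gt_three; linarith
    have h2pi : ‖(2 * (Real.pi : ℂ) * I)‖ = 2 * Real.pi := by
      simp [Complex.norm_I, Complex.norm_real, abs_of_pos Real.pi_pos]
    have hn1 : ‖(1 : ℂ) / (2 * Real.pi * I)‖ ≤ 1 := by
      rw [norm_div, norm_one, h2pi, div_le_one (by linarith)]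
      exact hpi
    calc ‖(1:ℂ) / (2 * Real.pi * I)‖ *
          ‖∫ t in (-T)..T, (y : ℂ) ^ ((c : ℂ) + t * I) / ((c : ℂ) + t * I)‖
        ≤ 1 * ‖∫ t in (-T)..T, (y : ℂ) ^ ((c : ℂ) + t * I) / ((c : ℂ) + t * I)‖ := by
          gcongr
      _ = ‖∫ t in (-T)..T, (y : ℂ) ^ ((c : ℂ) + t * I) / ((c : ℂ) + t * I)‖ := one_mul _
      _ ≤ C / T := hbd
  · exact tendsto_const_nhds.div_atTop tendsto_id
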